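/- Define f : ℝ → ℝ by f(t) = ∫₀ᵗ √(cosh s) ds. Let B, C, E, F, B′, C′, E′, F′ ∈ ℝ satisfy B E′ + C F′ = B′ E + C′ F. Define w₁(t) = tanh t, w₂(t) = w₃(t) = sech t, p₁(t) = B(f(t) tanh t − 2√(cosh t)) + i E/√(cosh t), p₂(t) = B f(t) sech t + C √(cosh t) + i E sinh t/(2√(cosh t)) + i F/√(cosh t), p₃(t) = B f(t) sech t − C √(cosh t) + i E sinh t/(2√(cosh t)) − i F/√(cosh t), and q₁, q₂, q₃ by the same formulas with B′, C′, E′, F′ in place of B, C, E, F. Let r₁, r₂, r₃ : ℝ → ℂ be the unique differentiable functions with r_j(0) = 0 satisfying dr₁/dt = ½(conj(p₂)conj(p₃) + conj(q₃)conj(q₂)), dr₂/dt = ½(conj(q₃)conj(q₁) − conj(p₁)conj(p₃)), dr₃/dt = −½(conj(p₁)conj(q₂) + conj(p₂)conj(q₁)). Define Φ : ℝ³ → ℂ³ by Φ(y₁,y₂,t) = (½(y₁²+y₂²)w₁(t) + y₁p₁(t) + y₂q₁(t) + r₁(t), ½(y₁²−y₂²)w₂(t) + y₁p₂(t) − y₂q₂(t)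 + r₂(t), y₁y₂w₃(t) + y₁q₃(t) + y₂p₃(t) + r₃(t)). Then at every point of ℝ³, ω vanishes on each pair of partial derivatives of Φ and Im Ω(∂Φ/∂y₁, ∂Φ/∂y₂, ∂Φ/∂t) = 0; that is, N = Φ(ℝ³) is a special Lagrangian 3-fold in ℂ³ wherever it is nonsingular. -/

import Mathlib

noncomputable section

open Complex ComplexConjugate

/-- ℂ³ as triples of complex numbers. -/
abbrev C3 := ℂ × ℂ × ℂ

/-- The standard Kähler form ω(u,v) = Σ Im(conj(u_j)·v_j). -/
def omega3 (u v : C3) : ℝ :=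
  (conj u.1 * v.1).im + (conj u.2.1 * v.2.1).im + (conj u.2.2 * v.2.2).im

/-- The holomorphic volume form Ω(u,v,w): determinant of the matrix with columns u,v,w. -/
def Omega3 (u v w : C3) : ℂ :=
  u.1 * (v.2.1 * w.2.2 - v.2.2 * w.2.1)
  - v.1 * (u.2.1 * w.2.2 - u.2.2 * w.2.1)
  + w.1 * (u.2.1 * v.2.2 - u.2.2 * v.2.1)

/-- f(t) = ∫₀ᵗ √(cosh s) ds. -/
def fInt (t : ℝ) : ℝ := ∫ s in (0:ℝ)..t, Real.sqrt (Real.cosh s)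

/-- p₁(t) = B(f(t) tanh t − 2√(cosh t)) + iE/√(cosh t). -/
def sol1 (B E : ℝ) (t : ℝ) : ℂ :=
  ((B * (fInt t * Real.tanh t - 2 * Real.sqrt (Real.cosh t)) : ℝ) : ℂ)
  + Complex.I * ((E / Real.sqrt (Real.cosh t) : ℝ) : ℂ)

/-- p₂(t) = B f(t) sech t + C√(cosh t) + iE sinh t/(2√(cosh t)) + iF/√(cosh t). -/
def sol2 (B C E F : ℝ) (t : ℝ) : ℂ :=
  ((B * fInt t / Real.cosh t + C * Real.sqrt (Real.cosh t) : ℝ) : ℂ)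
  + Complex.I * ((E * Real.sinh t / (2 * Real.sqrt (Real.cosh t))
      + F / Real.sqrt (Real.cosh t) : ℝ) : ℂ)

/-- p₃(t) = B f(t) sech t − C√(cosh t) + iE sinh t/(2√(cosh t)) − iF/√(cosh t). -/
def sol3 (B C E F : ℝ) (t : ℝ) : ℂ :=
  ((B * fInt t / Real.cosh t - C * Real.sqrt (Real.cosh t) : ℝ) : ℂ)
  + Complex.I * ((E * Real.sinh t / (2 * Real.sqrt (Real.cosh t))
      - F / Real.sqrt (Real.cosh t) : ℝ) : ℂ)


lemma hFInt (t : ℝ) : HasDerivAt fInt (Real.sqrt (Real.cosh t)) t := by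
  have hcont : Continuous fun s => Real.sqrt (Real.cosh s) := by continuity
  exact intervalIntegral.integral_hasDerivAt_right (hcont.intervalIntegrable _ _)
    (hcont.stronglyMeasurableAtFilter _ _) hcont.continuousAt

lemma hTanh (t : ℝ) : HasDerivAt Real.tanh ((Real.cosh t)^2)⁻¹ t := by
  have h : HasDerivAt (fun u => Real.sinh u / Real.cosh u)
      ((Real.cosh t * Real.cosh t - Real.sinh t * Real.sinh t) / Real.cosh t ^ 2) t :=
    (Real.hasDerivAt_sinh t).div (Real.hasDerivAt_cosh t) ((Real.cosh_pos t).ne')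
  have heq : Real.tanh = fun u => Real.sinh u / Real.cosh u := funext Real.tanh_eq_sinh_div_cosh
  rw [heq]
  convert h using 1
  have := Real.cosh_sq_sub_sinh_sq t
  rw [show Real.cosh t * Real.cosh t - Real.sinh t * Real.sinh t = 1 by nlinarith]
  rw [one_div]

lemma hInvCosh (t : ℝ) : HasDerivAt (fun u => (Real.cosh u)⁻¹)
    (-(Real.sinh t) / (Real.cosh t)^2) t := by
  have := (Real.hasDerivAt_cosh t).inv (Real.cosh_pos t).ne'
  exact this

lemma hSqrtCosh (t : ℝ) : HasDerivAt (fun u => Real.sqrt (Real.cosh u))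
    (Real.sinh t / (2 * Real.sqrt (Real.cosh t))) t := by
  have := (Real.hasDerivAt_sqrt (Real.cosh_pos t).ne').comp t (Real.hasDerivAt_cosh t)
  exact this.congr_deriv (by ring)

lemma hSol1 (B E : ℝ) (t : ℝ) : HasDerivAt (sol1 B E)
    (((B * fInt t / (Real.cosh t)^2 : ℝ) : ℂ)
      + Complex.I * ((-(E * Real.sinh t) / (2 * Real.cosh t * Real.sqrt (Real.cosh t)) : ℝ) : ℂ)) t := by
  have hc : (0:ℝ) < Real.cosh t := Real.cosh_pos t
  have hg : (0:ℝ) < Real.sqrt (Real.cosh t) := Real.sqrt_pos.2 hc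
  have hgc : Real.sqrt (Real.cosh t) ^ 2 = Real.cosh t := Real.sq_sqrt hc.le
  have hre : HasDerivAt (fun u => B * (fInt u * Real.tanh u - 2 * Real.sqrt (Real.cosh u)))
      (B * ((Real.sqrt (Real.cosh t) * Real.tanh t + fInt t * ((Real.cosh t)^2)⁻¹)
        - 2 * (Real.sinh t / (2 * Real.sqrt (Real.cosh t))))) t :=
    (((hFInt t).mul (hTanh t)).sub ((hSqrtCosh t).const_mul 2)).const_mul B
  have him : HasDerivAt (fun u => E / Real.sqrt (Real.cosh u))
      ((0 * Real.sqrt (Real.cosh t) - E * (Real.sinh t / (2 * Real.sqrt (Real.cosh t))))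
        / Real.sqrt (Real.cosh t) ^ 2) t :=
    (hasDerivAt_const t E).div (hSqrtCosh t) hg.ne'
  have h := (hre.ofReal_comp).add ((him.ofReal_comp).const_mul Complex.I)
  refine h.congr_deriv (Eq.symm ?_)
  rw [Complex.ext_iff]
  simp only [Complex.add_re, Complex.add_im, Complex.mul_re, Complex.mul_im,
    Complex.I_re, Complex.I_im, Complex.ofReal_re, Complex.ofReal_im,
    Real.tanh_eq_sinh_div_cosh]
  constructor
  · field_simp
    linear_combination (-2*B*Real.sinh t*Real.sqrt (Real.cosh t)^2*Real.cosh t) * hgc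
  · field_simp
    linear_combination (-E * Real.sinh t) * hgc

lemma hSol2 (B C E F : ℝ) (t : ℝ) : HasDerivAt (sol2 B C E F)
    (((B / Real.sqrt (Real.cosh t) - B * fInt t * Real.sinh t / (Real.cosh t)^2
        + C * Real.sinh t / (2 * Real.sqrt (Real.cosh t)) : ℝ) : ℂ)
      + Complex.I * ((E * ((Real.cosh t)^2 + 1) / (4 * Real.cosh t * Real.sqrt (Real.cosh t))
        - F * Real.sinh t / (2 * Real.cosh t * Real.sqrt (Real.cosh t)) : ℝ) : ℂ)) t := by
  have hc : (0:ℝ) < Real.cosh t := Real.cosh_pos t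
  have hg : (0:ℝ) < Real.sqrt (Real.cosh t) := Real.sqrt_pos.2 hc
  have hgc : Real.sqrt (Real.cosh t) ^ 2 = Real.cosh t := Real.sq_sqrt hc.le
  have hs2 : Real.sinh t ^ 2 = (Real.cosh t)^2 - 1 := by nlinarith [Real.cosh_sq_sub_sinh_sq t]
  have hre : HasDerivAt (fun u => B * fInt u / Real.cosh u + C * Real.sqrt (Real.cosh u))
      ((B * Real.sqrt (Real.cosh t) * Real.cosh t - B * fInt t * Real.sinh t) / (Real.cosh t)^2
        + C * (Real.sinh t / (2 * Real.sqrt (Real.cosh t)))) t :=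
    (((hFInt t).const_mul B).div (Real.hasDerivAt_cosh t) hc.ne').add ((hSqrtCosh t).const_mul C)
  have him : HasDerivAt (fun u => E * Real.sinh u / (2 * Real.sqrt (Real.cosh u))
        + F / Real.sqrt (Real.cosh u))
      ((E * Real.cosh t * (2 * Real.sqrt (Real.cosh t))
          - E * Real.sinh t * (2 * (Real.sinh t / (2 * Real.sqrt (Real.cosh t)))))
          / (2 * Real.sqrt (Real.cosh t))^2
        + (0 * Real.sqrt (Real.cosh t) - F * (Real.sinh t / (2 * Real.sqrt (Real.cosh t))))
          / Real.sqrt (Real.cosh t) ^ 2) t :=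
    ((((Real.hasDerivAt_sinh t).const_mul E).div ((hSqrtCosh t).const_mul 2)
        (by positivity)).add ((hasDerivAt_const t F).div (hSqrtCosh t) hg.ne'))
  have h := (hre.ofReal_comp).add ((him.ofReal_comp).const_mul Complex.I)
  refine h.congr_deriv (Eq.symm ?_)
  rw [Complex.ext_iff]
  simp only [Complex.add_re, Complex.add_im, Complex.mul_re, Complex.mul_im,
    Complex.I_re, Complex.I_im, Complex.ofReal_re, Complex.ofReal_im]
  constructor
  · field_simp
    linear_combination (-16*B*Real.sqrt (Real.cosh t)^2*Real.cosh t) * hgc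
  · field_simp
    linear_combination (-4*Real.cosh t^2*E + 4*E - 8*F*Real.sinh t) * hgc
      + (4*Real.cosh t*E) * hs2

lemma sol3_eq (B C E F : ℝ) : sol3 B C E F = sol2 B (-C) E (-F) := by
  funext t
  unfold sol2 sol3
  push_cast
  ring

lemma hSol3 (B C E F : ℝ) (t : ℝ) : HasDerivAt (sol3 B C E F)
    (((B / Real.sqrt (Real.cosh t) - B * fInt t * Real.sinh t / (Real.cosh t)^2
        - C * Real.sinh t / (2 * Real.sqrt (Real.cosh t)) : ℝ) : ℂ)
      + Complex.I * ((E * ((Real.cosh t)^2 + 1) / (4 * Real.cosh t * Real.sqrt (Real.cosh t))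
        + F * Real.sinh t / (2 * Real.cosh t * Real.sqrt (Real.cosh t)) : ℝ) : ℂ)) t := by
  rw [sol3_eq]
  convert hSol2 B (-C) E (-F) t using 2 <;> push_cast <;> ring


set_option maxHeartbeats 4000000 in
theorem statement_14
    (B C E F B' C' E' F' : ℝ)
    (hconstr : B * E' + C * F' = B' * E + C' * F)
    (r₁ r₂ r₃ : ℝ → ℂ)
    (hr0 : r₁ 0 = 0 ∧ r₂ 0 = 0 ∧ r₃ 0 = 0)
    (hr1 : ∀ t : ℝ, HasDerivAt r₁
      ((1/2 : ℂ) * (conj (sol2 B C E F t) * conj (sol3 B C E F t)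
        + conj (sol3 B' C' E' F' t) * conj (sol2 B' C' E' F' t))) t)
    (hr2 : ∀ t : ℝ, HasDerivAt r₂
      ((1/2 : ℂ) * (conj (sol3 B' C' E' F' t) * conj (sol1 B' E' t)
        - conj (sol1 B E t) * conj (sol3 B C E F t))) t)
    (hr3 : ∀ t : ℝ, HasDerivAt r₃
      (-(1/2 : ℂ) * (conj (sol1 B E t) * conj (sol2 B' C' E' F' t)
        + conj (sol2 B C E F t) * conj (sol1 B' E' t))) t)
    (Φ : ℝ → ℝ → ℝ → C3)
    (hΦ : ∀ y₁ y₂ t : ℝ, Φ y₁ y₂ t =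
      (((((1/2 : ℝ) * (y₁^2 + y₂^2) * Real.tanh t : ℝ)) : ℂ)
         + y₁ * sol1 B E t + y₂ * sol1 B' E' t + r₁ t,
       ((((1/2 : ℝ) * (y₁^2 - y₂^2) * (Real.cosh t)⁻¹ : ℝ)) : ℂ)
         + y₁ * sol2 B C E F t - y₂ * sol2 B' C' E' F' t + r₂ t,
       (((y₁ * y₂ * (Real.cosh t)⁻¹ : ℝ)) : ℂ)
         + y₁ * sol3 B' C' E' F' t + y₂ * sol3 B C E F t + r₃ t)) :
    ∀ y₁ y₂ t : ℝ,
      omega3 (deriv (fun s => Φ s y₂ t) y₁) (deriv (fun s => Φ y₁ s t) y₂) = 0 ∧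
      omega3 (deriv (fun s => Φ s y₂ t) y₁) (deriv (fun s => Φ y₁ y₂ s) t) = 0 ∧
      omega3 (deriv (fun s => Φ y₁ s t) y₂) (deriv (fun s => Φ y₁ y₂ s) t) = 0 ∧
      (Omega3 (deriv (fun s => Φ s y₂ t) y₁) (deriv (fun s => Φ y₁ s t) y₂)
        (deriv (fun s => Φ y₁ y₂ s) t)).im = 0 := by
  intro y₁ y₂ t
  have hc : (0:ℝ) < Real.cosh t := Real.cosh_pos t
  have hg : (0:ℝ) < Real.sqrt (Real.cosh t) := Real.sqrt_pos.2 hc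
  have h1 : HasDerivAt (fun a : ℝ =>
      ((((((1/2 : ℝ) * (a^2 + y₂^2) * Real.tanh t : ℝ)) : ℂ)
         + a * sol1 B E t + y₂ * sol1 B' E' t + r₁ t,
       ((((1/2 : ℝ) * (a^2 - y₂^2) * (Real.cosh t)⁻¹ : ℝ)) : ℂ)
         + a * sol2 B C E F t - y₂ * sol2 B' C' E' F' t + r₂ t,
       (((a * y₂ * (Real.cosh t)⁻¹ : ℝ)) : ℂ)
         + a * sol3 B' C' E' F' t + y₂ * sol3 B C E F t + r₃ t) : C3))
      ((((y₁ * Real.tanh t : ℝ)) : ℂ) + sol1 B E t,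
      (((y₁ * (Real.cosh t)⁻¹ : ℝ)) : ℂ) + sol2 B C E F t,
      (((y₂ * (Real.cosh t)⁻¹ : ℝ)) : ℂ) + sol3 B' C' E' F' t) y₁ := by
    refine HasDerivAt.prodMk ?_ (HasDerivAt.prodMk ?_ ?_)
    · have h := (((((hasDerivAt_pow 2 y₁).add_const (y₂^2)).const_mul ((1:ℝ)/2)).mul_const
        (Real.tanh t)).ofReal_comp.add
        (((hasDerivAt_id y₁).ofReal_comp).mul_const (sol1 B E t))).add_const
        ((y₂ : ℂ) * sol1 B' E' t + r₁ t)
      convert h using 1 <;>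
        first
          | (funext x; push_cast [id_eq, Pi.add_apply, Pi.sub_apply, Pi.neg_apply]; ring)
          | (push_cast [id_eq]; ring)
          | (push_cast [id_eq]; norm_num; ring)
    · have h := ((((((hasDerivAt_pow 2 y₁).sub_const (y₂^2)).const_mul ((1:ℝ)/2)).mul_const
        ((Real.cosh t)⁻¹)).ofReal_comp.add
        (((hasDerivAt_id y₁).ofReal_comp).mul_const (sol2 B C E F t))).add_const
        (r₂ t - (y₂ : ℂ) * sol2 B' C' E' F' t))
      convert h using 1 <;>
        first
          | (funext x; push_cast [id_eq, Pi.add_apply, Pi.sub_apply, Pi.neg_apply]; ring)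
          | (push_cast [id_eq]; ring)
          | (push_cast [id_eq]; norm_num; ring)
    · have h := (((((hasDerivAt_id y₁).mul_const y₂).mul_const
        ((Real.cosh t)⁻¹)).ofReal_comp.add
        (((hasDerivAt_id y₁).ofReal_comp).mul_const (sol3 B' C' E' F' t))).add_const
        ((y₂ : ℂ) * sol3 B C E F t + r₃ t))
      convert h using 1 <;>
        first
          | (funext x; push_cast [id_eq, Pi.add_apply, Pi.sub_apply, Pi.neg_apply]; ring)
          | (push_cast [id_eq]; ring)
          | (push_cast [id_eq]; norm_num; ring)
  have h2 : HasDerivAt (fun b : ℝ =>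
      ((((((1/2 : ℝ) * (y₁^2 + b^2) * Real.tanh t : ℝ)) : ℂ)
         + y₁ * sol1 B E t + b * sol1 B' E' t + r₁ t,
       ((((1/2 : ℝ) * (y₁^2 - b^2) * (Real.cosh t)⁻¹ : ℝ)) : ℂ)
         + y₁ * sol2 B C E F t - b * sol2 B' C' E' F' t + r₂ t,
       (((y₁ * b * (Real.cosh t)⁻¹ : ℝ)) : ℂ)
         + y₁ * sol3 B' C' E' F' t + b * sol3 B C E F t + r₃ t) : C3))
      ((((y₂ * Real.tanh t : ℝ)) : ℂ) + sol1 B' E' t,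
      -((((y₂ * (Real.cosh t)⁻¹ : ℝ)) : ℂ)) - sol2 B' C' E' F' t,
      (((y₁ * (Real.cosh t)⁻¹ : ℝ)) : ℂ) + sol3 B C E F t) y₂ := by
    refine HasDerivAt.prodMk ?_ (HasDerivAt.prodMk ?_ ?_)
    · have h := (((((hasDerivAt_pow 2 y₂).const_add (y₁^2)).const_mul ((1:ℝ)/2)).mul_const
        (Real.tanh t)).ofReal_comp.add
        (((hasDerivAt_id y₂).ofReal_comp).mul_const (sol1 B' E' t))).add_const
        ((y₁ : ℂ) * sol1 B E t + r₁ t)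
      convert h using 1 <;>
        first
          | (funext x; push_cast [id_eq, Pi.add_apply, Pi.sub_apply, Pi.neg_apply]; ring)
          | (push_cast [id_eq]; ring)
          | (push_cast [id_eq]; norm_num; ring)
    · have h := ((((((hasDerivAt_pow 2 y₂).const_sub (y₁^2)).const_mul ((1:ℝ)/2)).mul_const
        ((Real.cosh t)⁻¹)).ofReal_comp.add
        ((((hasDerivAt_id y₂).ofReal_comp).mul_const (sol2 B' C' E' F' t)).neg)).add_const
        ((y₁ : ℂ) * sol2 B C E F t + r₂ t))
      convert h using 1 <;>
        first
          | (funext x; push_cast [id_eq, Pi.add_apply, Pi.sub_apply, Pi.neg_apply]; ring)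
          | (push_cast [id_eq]; ring)
          | (push_cast [id_eq]; norm_num; ring)
    · have h := (((((hasDerivAt_id y₂).const_mul y₁).mul_const
        ((Real.cosh t)⁻¹)).ofReal_comp.add
        (((hasDerivAt_id y₂).ofReal_comp).mul_const (sol3 B C E F t))).add_const
        ((y₁ : ℂ) * sol3 B' C' E' F' t + r₃ t))
      convert h using 1 <;>
        first
          | (funext x; push_cast [id_eq, Pi.add_apply, Pi.sub_apply, Pi.neg_apply]; ring)
          | (push_cast [id_eq]; ring)
          | (push_cast [id_eq]; norm_num; ring)
  have h3 : HasDerivAt (fun u : ℝ =>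
      ((((((1/2 : ℝ) * (y₁^2 + y₂^2) * Real.tanh u : ℝ)) : ℂ)
         + y₁ * sol1 B E u + y₂ * sol1 B' E' u + r₁ u,
       ((((1/2 : ℝ) * (y₁^2 - y₂^2) * (Real.cosh u)⁻¹ : ℝ)) : ℂ)
         + y₁ * sol2 B C E F u - y₂ * sol2 B' C' E' F' u + r₂ u,
       (((y₁ * y₂ * (Real.cosh u)⁻¹ : ℝ)) : ℂ)
         + y₁ * sol3 B' C' E' F' u + y₂ * sol3 B C E F u + r₃ u) : C3))
      ((((1/2 * (y₁^2 + y₂^2) * ((Real.cosh t)^2)⁻¹ : ℝ)) : ℂ) + (y₁ : ℂ) * (((B * fInt t / (Real.cosh t)^2 : ℝ) : ℂ) + Complex.I * ((-(E * Real.sinh t) / (2 * Real.cosh t * Real.sqrt (Real.cosh t)) : ℝ) : ℂ)) + (y₂ : ℂ) * (((B' * fInt t / (Real.cosh t)^2 : ℝ) : ℂ) + Complex.I * ((-(E' * Real.sinh t) / (2 * Real.cosh t * Real.sqrt (Real.cosh t)) : ℝ) : ℂ)) + (1/2 : ℂ) * (conj (sol2 B C E F t) * conj (sol3 B C E F t)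 + conj (sol3 B' C' E' F' t) * conj (sol2 B' C' E' F' t)),
      (((1/2 * (y₁^2 - y₂^2) * (-(Real.sinh t) / (Real.cosh t)^2) : ℝ)) : ℂ) + (y₁ : ℂ) * (((B / Real.sqrt (Real.cosh t) - B * fInt t * Real.sinh t / (Real.cosh t)^2 + C * Real.sinh t / (2 * Real.sqrt (Real.cosh t)) : ℝ) : ℂ) + Complex.I * ((E * ((Real.cosh t)^2 + 1) / (4 * Real.cosh t * Real.sqrt (Real.cosh t)) - F * Real.sinh t / (2 * Real.cosh t * Real.sqrt (Real.cosh t)) : ℝ) : ℂ)) - (y₂ : ℂ) * (((B' / Real.sqrt (Real.cosh t) - B' * fInt t * Real.sinh t / (Real.cosh t)^2 + C' * Real.sinh t / (2 * Real.sqrt (Real.cosh t)) : ℝ) : ℂ) + Complex.I * ((E' * ((Real.cosh t)^2 + 1) / (4 * Real.cosh t * Real.sqrt (Real.cosh t)) - F' * Real.sinh t / (2 * Real.cosh t * Real.sqrt (Real.cosh t)) : ℝ) : ℂ)) + (1/2 : ℂ) * (conj (sol3 B' C' E' F' t) * conj (sol1 B' E' t) - conj (sol1 B E t) * conj (sol3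 B C E F t)),
      (((y₁ * y₂ * (-(Real.sinh t) / (Real.cosh t)^2) : ℝ)) : ℂ) + (y₁ : ℂ) * (((B' / Real.sqrt (Real.cosh t) - B' * fInt t * Real.sinh t / (Real.cosh t)^2 - C' * Real.sinh t / (2 * Real.sqrt (Real.cosh t)) : ℝ) : ℂ) + Complex.I * ((E' * ((Real.cosh t)^2 + 1) / (4 * Real.cosh t * Real.sqrt (Real.cosh t)) + F' * Real.sinh t / (2 * Real.cosh t * Real.sqrt (Real.cosh t)) : ℝ) : ℂ)) + (y₂ : ℂ) * (((B / Real.sqrt (Real.cosh t) - B * fInt t * Real.sinh t / (Real.cosh t)^2 - C * Real.sinh t / (2 * Real.sqrt (Real.cosh t)) : ℝ) : ℂ) + Complex.I * ((E * ((Real.cosh t)^2 + 1) / (4 * Real.cosh t * Real.sqrt (Real.cosh t)) + F * Real.sinh t / (2 * Real.cosh t * Real.sqrt (Real.cosh t)) : ℝ) : ℂ)) + -(1/2 : ℂ) * (conj (sol1 B E t) * conj (sol2 B' C' E' F' t) + conj (sol2 B C E F t) * conj (sol1 B' E' t))) t := by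
    refine HasDerivAt.prodMk ?_ (HasDerivAt.prodMk ?_ ?_)
    · have h := ((((hTanh t).const_mul ((1:ℝ)/2 * (y₁^2 + y₂^2))).ofReal_comp.add
        ((hSol1 B E t).const_mul (y₁ : ℂ))).add
        ((hSol1 B' E' t).const_mul (y₂ : ℂ))).add (hr1 t)
      convert h using 1 <;>
        first
          | (funext x; push_cast [id_eq, Pi.add_apply, Pi.sub_apply, Pi.neg_apply]; ring)
          | (push_cast [id_eq]; ring)
          | (push_cast [id_eq]; norm_num; ring)
    · have h := ((((hInvCosh t).const_mul ((1:ℝ)/2 * (y₁^2 - y₂^2))).ofReal_comp.add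
        ((hSol2 B C E F t).const_mul (y₁ : ℂ))).sub
        ((hSol2 B' C' E' F' t).const_mul (y₂ : ℂ))).add (hr2 t)
      convert h using 1 <;>
        first
          | (funext x; push_cast [id_eq, Pi.add_apply, Pi.sub_apply, Pi.neg_apply]; ring)
          | (push_cast [id_eq]; ring)
          | (push_cast [id_eq]; norm_num; ring)
    · have h := ((((hInvCosh t).const_mul (y₁ * y₂)).ofReal_comp.add
        ((hSol3 B' C' E' F' t).const_mul (y₁ : ℂ))).add
        ((hSol3 B C E F t).const_mul (y₂ : ℂ))).add (hr3 t)
      convert h using 1 <;>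
        first
          | (funext x; push_cast [id_eq, Pi.add_apply, Pi.sub_apply, Pi.neg_apply]; ring)
          | (push_cast [id_eq]; ring)
          | (push_cast [id_eq]; norm_num; ring)
  simp only [hΦ]
  rw [h1.deriv, h2.deriv, h3.deriv]
  have hgne : Real.sqrt (Real.cosh t) ≠ 0 := ne_of_gt hg
  have hcg : Real.cosh t = Real.sqrt (Real.cosh t)^2 := (Real.sq_sqrt hc.le).symm
  have hs2 : Real.sinh t^2 = Real.sqrt (Real.cosh t)^4 - 1 := by
    nlinarith [Real.cosh_sq_sub_sinh_sq t, Real.sq_sqrt hc.le]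
  refine ⟨?_, ?_, ?_, ?_⟩
  ·   simp only [omega3, Omega3, sol1, sol2, sol3, Real.tanh_eq_sinh_div_cosh,
        show (1/2:ℂ) = ((1/2:ℝ):ℂ) by norm_num]
      simp only [map_add, map_sub, map_mul, map_neg, Complex.conj_ofReal, Complex.conj_I]
      simp only [Complex.add_re, Complex.add_im, Complex.sub_re, Complex.sub_im,
        Complex.neg_re, Complex.neg_im, Complex.mul_re, Complex.mul_im,
        Complex.I_re, Complex.I_im, Complex.ofReal_re, Complex.ofReal_im]
      set g := Real.sqrt (Real.cosh t) with hgdef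
      rw [show Real.cosh t = g^2 from hcg]
      field_simp
      linear_combination (-8*g^3) * hconstr
  ·   simp only [omega3, Omega3, sol1, sol2, sol3, Real.tanh_eq_sinh_div_cosh,
        show (1/2:ℂ) = ((1/2:ℝ):ℂ) by norm_num]
      simp only [map_add, map_sub, map_mul, map_neg, Complex.conj_ofReal, Complex.conj_I]
      simp only [Complex.add_re, Complex.add_im, Complex.sub_re, Complex.sub_im,
        Complex.neg_re, Complex.neg_im, Complex.mul_re, Complex.mul_im,
        Complex.I_re, Complex.I_im, Complex.ofReal_re, Complex.ofReal_im]
      set g := Real.sqrt (Real.cosh t) with hgdef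
      rw [show Real.cosh t = g^2 from hcg]
      field_simp
      linear_combination ((-8)*y₁^2*g*E + (-8)*y₁*(fInt t)*g*B*E + (-8)*y₁*(fInt t)*g*B'*E' + (8)*y₂*(fInt t)*g*B*E' + (-8)*y₂^2*g*E + (-8)*y₁*g^4*C*E + (-8)*y₂*(fInt t)*g*B'*E + (8)*y₂*g^4*C'*E + (8)*y₁*g^4*C'*E' + (8)*y₂*g^4*C*E') * hs2 + ((0:ℝ)) * hconstr
  ·   simp only [omega3, Omega3, sol1, sol2, sol3, Real.tanh_eq_sinh_div_cosh,
        show (1/2:ℂ) = ((1/2:ℝ):ℂ) by norm_num]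
      simp only [map_add, map_sub, map_mul, map_neg, Complex.conj_ofReal, Complex.conj_I]
      simp only [Complex.add_re, Complex.add_im, Complex.sub_re, Complex.sub_im,
        Complex.neg_re, Complex.neg_im, Complex.mul_re, Complex.mul_im,
        Complex.I_re, Complex.I_im, Complex.ofReal_re, Complex.ofReal_im]
      set g := Real.sqrt (Real.cosh t) with hgdef
      rw [show Real.cosh t = g^2 from hcg]
      field_simp
      linear_combination ((-8)*y₂^2*g*E' + (-8)*y₂*(fInt t)*g*B*E + (-8)*y₂*(fInt t)*g*B'*E' + (8)*y₁*(fInt t)*g*B'*E + (-8)*y₁^2*g*E' + (-8)*y₁*(fInt t)*g*B*E' + (8)*y₁*g^4*C*E' + (-8)*y₂*g^4*C'*E' + (8)*y₁*g^4*C'*E + (8)*y₂*g^4*C*E) * hs2 + ((0:ℝ)) * hconstr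
  ·   simp only [omega3, Omega3, sol1, sol2, sol3, Real.tanh_eq_sinh_div_cosh,
        show (1/2:ℂ) = ((1/2:ℝ):ℂ) by norm_num]
      simp only [map_add, map_sub, map_mul, map_neg, Complex.conj_ofReal, Complex.conj_I]
      simp only [Complex.add_re, Complex.add_im, Complex.sub_re, Complex.sub_im,
        Complex.neg_re, Complex.neg_im, Complex.mul_re, Complex.mul_im,
        Complex.I_re, Complex.I_im, Complex.ofReal_re, Complex.ofReal_im]
      set g := Real.sqrt (Real.cosh t) with hgdef
      rw [show Real.cosh t = g^2 from hcg]
      field_simp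
      linear_combination ((64)*y₁*(Real.sinh t)*(fInt t)^2*g*B*B'*E' + (-128)*y₁*(fInt t)*g^4*B*B'*E' + (-32)*y₁*(Real.sinh t)*(fInt t)^2*g*B'^2*E + (64)*y₁*(fInt t)*g^4*B'^2*E + (32)*y₁^2*y₂*(Real.sinh t)*g*E' + (-64)*y₁^2*g^4*B'*E' + (64)*y₁^2*(Real.sinh t)*(fInt t)*g*B'*E' + (32)*y₁^2*(Real.sinh t)*g^4*C'*E' + (64)*y₁*y₂*(Real.sinh t)*g^4*C*E' + (-16)*y₁*(Real.sinh t)*g^3*E*E'^2 + (-64)*y₁*g^3*E*E'*F' + (-32)*y₁*g^3*E'^2*F + (64)*y₁^2*(Real.sinh t)*(fInt t)*g*B*E + (32)*y₁^3*(Real.sinh t)*g*E + (32)*y₁*y₂^2*(Real.sinh t)*g*E + (-32)*y₁^2*(Real.sinh t)*g^4*C*E + (64)*y₁*y₂*(Real.sinh t)*g^4*C'*E + (-16)*y₁*(Real.sinh t)*g^3*E^3 + (32)*y₁*g^3*E^2*F + (-32)*y₂*(Real.sinh t)*(fInt t)^2*g*B^2*E' + (64)*y₂*(Real.sinh t)*(fInt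 t)^2*g*B*B'*E + (-128)*y₂*(fInt t)*g^4*B*B'*E + (32)*y₁*(Real.sinh t)*(fInt t)*g^4*B*C'*E' + (32)*y₂*(Real.sinh t)*(fInt t)*g^4*B*C*E' + (32)*y₁*(Real.sinh t)*(fInt t)^2*g*B^2*E + (64)*y₂^2*(Real.sinh t)*(fInt t)*g*B*E + (-32)*y₁*(Real.sinh t)*(fInt t)*g^4*B*C*E + (32)*y₂*(Real.sinh t)*(fInt t)*g^4*B*C'*E + (64)*y₂*(fInt t)*g^4*B^2*E' + (-64)*y₁*g^7*B*C'*E' + (-64)*y₂*g^7*B*C*E' + (-64)*y₁*(fInt t)*g^4*B^2*E + (-64)*y₁^2*g^4*B*E + (-64)*y₂^2*g^4*B*E + (64)*y₁*g^7*B*C*E + (-64)*y₂*g^7*B*C'*E + (-64)*y₂*g^3*E*E'*F + (-32)*y₂*g^3*E^2*F' + (32)*y₂^2*(Real.sinh t)*g^4*C*E + (-16)*y₂*(Real.sinh t)*g^3*E^2*E' + (64)*y₂^2*(Real.sinh t)*(fInt t)*g*B'*E' + (32)*y₂^3*(Real.sinh t)*g*E' + (-32)*y₂^2*(Real.sinh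 t)*g^4*C'*E' + (-16)*y₂*(Real.sinh t)*g^3*E'^3 + (32)*y₂*g^3*E'^2*F' + (32)*y₁*(Real.sinh t)*(fInt t)*g^4*B'*C'*E + (32)*y₂*(Real.sinh t)*(fInt t)*g^4*B'*C*E + (32)*y₂*(Real.sinh t)*(fInt t)^2*g*B'^2*E' + (32)*y₁*(Real.sinh t)*(fInt t)*g^4*B'*C*E' + (-32)*y₂*(Real.sinh t)*(fInt t)*g^4*B'*C'*E' + (-64)*y₁*g^7*B'*C'*E + (-64)*y₂*g^7*B'*C*E + (-64)*y₂*(fInt t)*g^4*B'^2*E' + (-64)*y₂^2*g^4*B'*E' + (-64)*y₁*g^7*B'*C*E' + (64)*y₂*g^7*B'*C'*E') * hs2 + ((0:ℝ)) * hconstr
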